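/- Let K₁ and K₂ be two externally tangent circles in the upper half-plane, each tangent to the real axis, and let K be any circle tangent to the real axis contained in the (closed) curvilinear triangular region bounded by K₁, K₂, and the real axis, with K distinct from K₁ and K₂. Then the radius of K is strictly smaller than the radius of K₁ and strictly smaller than the radius of K₂. -/

import Mathlib

open Complex

lemma dist_sq_aux (a b s t : ℝ) :
    (dist ((a : ℂ) + s * I) ((b : ℂ) + t * I))^2 = (a - b)^2 + (s - t)^2 := by
  rw [Complex.dist_eq, Complex.sq_norm, Complex.normSq_apply]
  simp
  ring

lemma gap_alg_aux (a b c x₁ x x₂ : ℝ) (hap : 0 < a) (hbp : 0 < b) (hcp : 0 < c)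
    (e1 : x₂ - x₁ ≤ 2 * (b * c)) (e2 : 2 * (a * b) ≤ x - x₁)
    (e3 : 2 * (a * c) ≤ x₂ - x) : a ^ 2 < b ^ 2 ∧ a ^ 2 < c ^ 2 := by
  have key : a * b + a * c ≤ b * c := by linarith
  have hab : a < b := by
    have h : a * c < b * c := by nlinarith [mul_pos hap hbp]
    exact lt_of_mul_lt_mul_right h hcp.le
  have hac : a < c := by
    have h : a * b < c * b := by nlinarith [mul_pos hap hcp]
    exact lt_of_mul_lt_mul_right h hbp.le
  exact ⟨pow_lt_pow_left₀ hab hap.le (by norm_num), pow_lt_pow_left₀ hac hap.le (by norm_num)⟩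

/-- Let `K₁`, `K₂` be externally tangent circles in the upper half-plane,
each tangent to the real axis (centers `xᵢ + rᵢ·i`, radii `rᵢ`), and let `K` (center
`x + r·i`, radius `r`) be a circle tangent to the real axis contained in the curvilinear
triangular gap bounded by `K₁`, `K₂` and `ℝ`: its tangency point `x` lies strictly between
`x₁` and `x₂` and its interior is disjoint from the interiors of `K₁` and `K₂`. Then
`r < r₁` and `r < r₂`. -/
theorem circle_in_gap_has_smaller_radius
    (x₁ x₂ x r₁ r₂ r : ℝ) (hr₁ : 0 < r₁) (hr₂ : 0 < r₂) (hr : 0 < r)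
    (htangent : dist ((x₁ : ℂ) + r₁ * I) ((x₂ : ℂ) + r₂ * I) = r₁ + r₂)
    (hx₁ : x₁ < x) (hx₂ : x < x₂)
    (hdisj₁ : r + r₁ ≤ dist ((x : ℂ) + r * I) ((x₁ : ℂ) + r₁ * I))
    (hdisj₂ : r + r₂ ≤ dist ((x : ℂ) + r * I) ((x₂ : ℂ) + r₂ * I)) :
    r < r₁ ∧ r < r₂ := by
  have h1 : (x₁ - x₂)^2 + (r₁ - r₂)^2 = (r₁ + r₂)^2 := by
    rw [← dist_sq_aux, htangent]
  have h2 : (r + r₁)^2 ≤ (x - x₁)^2 + (r - r₁)^2 := by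
    rw [← dist_sq_aux]
    exact pow_le_pow_left₀ (by positivity) hdisj₁ 2
  have h3 : (r + r₂)^2 ≤ (x - x₂)^2 + (r - r₂)^2 := by
    rw [← dist_sq_aux]
    exact pow_le_pow_left₀ (by positivity) hdisj₂ 2
  have h1' : (x₂ - x₁)^2 = 4 * (r₁ * r₂) := by nlinarith
  have h2' : 4 * (r * r₁) ≤ (x - x₁)^2 := by nlinarith
  have h3' : 4 * (r * r₂) ≤ (x₂ - x)^2 := by nlinarith
  have ha2 : (Real.sqrt r)^2 = r := Real.sq_sqrt hr.le
  have hb2 : (Real.sqrt r₁)^2 = r₁ := Real.sq_sqrt hr₁.le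
  have hc2 : (Real.sqrt r₂)^2 = r₂ := Real.sq_sqrt hr₂.le
  have hap : 0 < Real.sqrt r := Real.sqrt_pos.mpr hr
  have hbp : 0 < Real.sqrt r₁ := Real.sqrt_pos.mpr hr₁
  have hcp : 0 < Real.sqrt r₂ := Real.sqrt_pos.mpr hr₂
  have e1 : x₂ - x₁ ≤ 2 * (Real.sqrt r₁ * Real.sqrt r₂) := by
    have h4 : Real.sqrt ((x₂ - x₁)^2) ≤ Real.sqrt ((2 * (Real.sqrt r₁ * Real.sqrt r₂))^2) := by
      apply Real.sqrt_le_sqrt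
      rw [h1']
      have h5 : (2 * (Real.sqrt r₁ * Real.sqrt r₂))^2 = 4 * (r₁ * r₂) := by
        linear_combination (4 * (Real.sqrt r₂)^2) * hb2 + (4 * r₁) * hc2
      linarith
    rwa [Real.sqrt_sq (by linarith), Real.sqrt_sq (by positivity)] at h4
  have e2 : 2 * (Real.sqrt r * Real.sqrt r₁) ≤ x - x₁ := by
    have h4 : Real.sqrt ((2 * (Real.sqrt r * Real.sqrt r₁))^2) ≤ Real.sqrt ((x - x₁)^2) := by
      apply Real.sqrt_le_sqrt
      calc (2 * (Real.sqrt r * Real.sqrt r₁))^2 = 4 * (r * r₁) := by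
            linear_combination (4 * (Real.sqrt r₁)^2) * ha2 + (4 * r) * hb2
        _ ≤ (x - x₁)^2 := h2'
    rwa [Real.sqrt_sq (by positivity), Real.sqrt_sq (by linarith)] at h4
  have e3 : 2 * (Real.sqrt r * Real.sqrt r₂) ≤ x₂ - x := by
    have h4 : Real.sqrt ((2 * (Real.sqrt r * Real.sqrt r₂))^2) ≤ Real.sqrt ((x₂ - x)^2) := by
      apply Real.sqrt_le_sqrt
      calc (2 * (Real.sqrt r * Real.sqrt r₂))^2 = 4 * (r * r₂) := by
            linear_combination (4 * (Real.sqrt r₂)^2) * ha2 + (4 * r) * hc2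
        _ ≤ (x₂ - x)^2 := h3'
    rwa [Real.sqrt_sq (by positivity), Real.sqrt_sq (by linarith)] at h4
  obtain ⟨g1, g2⟩ := gap_alg_aux (Real.sqrt r) (Real.sqrt r₁) (Real.sqrt r₂) x₁ x x₂
    hap hbp hcp e1 e2 e3
  rw [ha2, hb2] at g1
  rw [ha2, hc2] at g2
  exact ⟨g1, g2⟩
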